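/- Let λ₁, λ₂ be probability measures on a measurable space and {Pₙ} a sequence of Markov kernels. Suppose there exist sets Cₙ, constants εₙ ∈ (0,1), and probability measures νₙ concentrated on Cₙ such that λ₁, λ₂ are concentrated on C₀, Pₙ(x, Cₙ) = 1 for all x ∈ Cₙ₋₁, and εₙ νₙ(A) ≤ Pₙ(x, A) ≤ εₙ⁻¹ νₙ(A) for all x ∈ Cₙ₋₁ and measurable A. Then for any k ≥ 1, ‖(λ₁ − λ₂)P_{1:k}‖_tv ≤ ϑ_k ‖λ₁ − λ₂‖_tv where ϑ_k = (2/(ε₁² log 3)) ∏_{i=2}^{k} (1−ε_i²)/(1+ε_i²). -/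

import Mathlib

open MeasureTheory Finset
open scoped ENNReal NNReal

/-- Total variation distance: `sup_A |μ(A) - ν(A)|`. -/
noncomputable def tvDist {R : Type*} [MeasurableSpace R] (μ ν : Measure R) : ℝ :=
  ⨆ s : {s : Set R // MeasurableSet s}, |(μ s.1).toReal - (ν s.1).toReal|

/-- `pushSeq λ P k = λ P₁ P₂ ⋯ P_k`, the initial measure pushed through the
first `k` Markov kernels. -/
noncomputable def pushSeq {R : Type*} [MeasurableSpace R]
    (lam : Measure R) (P : ℕ → R → Measure R) : ℕ → Measure R
  | 0 => lam
  | k + 1 => (pushSeq lam P k).bind (P (k + 1))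

section Aux

variable {R : Type*} [MeasurableSpace R]

lemma tvDist_nonneg (μ ν : Measure R) : 0 ≤ tvDist μ ν :=
  Real.iSup_nonneg fun _ => abs_nonneg _

lemma tvDist_bddAbove (μ ν : Measure R) [IsProbabilityMeasure μ] [IsProbabilityMeasure ν] :
    BddAbove (Set.range fun s : {s : Set R // MeasurableSet s} =>
      |(μ s.1).toReal - (ν s.1).toReal|) := by
  refine ⟨2, ?_⟩
  rintro _ ⟨s, rfl⟩
  have h1 : (μ s.1).toReal ≤ 1 := by
    simpa using ENNReal.toReal_mono (by simp) (prob_le_one (μ := μ) (s := s.1))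
  have h2 : (ν s.1).toReal ≤ 1 := by
    simpa using ENNReal.toReal_mono (by simp) (prob_le_one (μ := ν) (s := s.1))
  have h3 : (0:ℝ) ≤ (μ s.1).toReal := ENNReal.toReal_nonneg
  have h4 : (0:ℝ) ≤ (ν s.1).toReal := ENNReal.toReal_nonneg
  rw [abs_le]
  constructor <;> linarith

lemma le_tvDist (μ ν : Measure R) [IsProbabilityMeasure μ] [IsProbabilityMeasure ν]
    (s : Set R) (hs : MeasurableSet s) :
    (μ s).toReal - (ν s).toReal ≤ tvDist μ ν :=
  le_trans (le_abs_self _) (le_ciSup (tvDist_bddAbove μ ν) ⟨s, hs⟩)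

/-- One-sided bound for differences of integrals of bounded nonnegative functions,
via a Hahn-type set. -/
lemma lintegral_diff_le_of_hahn (μ₁ μ₂ : Measure R) [IsFiniteMeasure μ₁] [IsFiniteMeasure μ₂]
    (S : Set R) (hS : MeasurableSet S)
    (h₁ : ∀ t, MeasurableSet t → t ⊆ S → μ₂ t ≤ μ₁ t)
    (h₂ : ∀ t, MeasurableSet t → t ⊆ Sᶜ → μ₁ t ≤ μ₂ t)
    (g : R → ℝ≥0∞) (hg : Measurable g) (b : ℝ≥0∞) (hb : b ≠ ⊤) (hgb : ∀ x, g x ≤ b) :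
    (∫⁻ x, g x ∂μ₁).toReal - (∫⁻ x, g x ∂μ₂).toReal ≤
      b.toReal * ((μ₁ S).toReal - (μ₂ S).toReal) := by
  set h : R → ℝ≥0∞ := fun x => b - g x with hh
  have hhm : Measurable h := measurable_const.sub hg
  have hgh : ∀ x, g x + h x = b := fun x => add_tsub_cancel_of_le (hgb x)
  have hres1 : μ₂.restrict S ≤ μ₁.restrict S := by
    refine Measure.le_iff.2 fun t ht => ?_
    rw [Measure.restrict_apply ht, Measure.restrict_apply ht]
    exact h₁ _ (ht.inter hS) Set.inter_subset_right
  have hres2 : μ₁.restrict Sᶜ ≤ μ₂.restrict Sᶜ := by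
    refine Measure.le_iff.2 fun t ht => ?_
    rw [Measure.restrict_apply ht, Measure.restrict_apply ht]
    exact h₂ _ (ht.inter hS.compl) Set.inter_subset_right
  have hbS2 : b * μ₂ S = (∫⁻ x in S, g x ∂μ₂) + ∫⁻ x in S, h x ∂μ₂ := by
    rw [← setLIntegral_const S b, ← lintegral_add_left hg]
    exact lintegral_congr fun x => (hgh x).symm
  have hbS1 : b * μ₁ S = (∫⁻ x in S, g x ∂μ₁) + ∫⁻ x in S, h x ∂μ₁ := by
    rw [← setLIntegral_const S b, ← lintegral_add_left hg]
    exact lintegral_congr fun x => (hgh x).symm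
  have key : (∫⁻ x, g x ∂μ₁) + b * μ₂ S ≤ (∫⁻ x, g x ∂μ₂) + b * μ₁ S := by
    rw [← lintegral_add_compl g hS (μ := μ₁), ← lintegral_add_compl g hS (μ := μ₂),
      hbS2, hbS1]
    have e1 : (∫⁻ x in Sᶜ, g x ∂μ₁) ≤ ∫⁻ x in Sᶜ, g x ∂μ₂ := lintegral_mono' hres2 le_rfl
    have e2 : (∫⁻ x in S, h x ∂μ₂) ≤ ∫⁻ x in S, h x ∂μ₁ := lintegral_mono' hres1 le_rfl
    calc (∫⁻ x in S, g x ∂μ₁) + (∫⁻ x in Sᶜ, g x ∂μ₁)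
        + ((∫⁻ x in S, g x ∂μ₂) + ∫⁻ x in S, h x ∂μ₂)
        ≤ (∫⁻ x in S, g x ∂μ₁) + (∫⁻ x in Sᶜ, g x ∂μ₂)
        + ((∫⁻ x in S, g x ∂μ₂) + ∫⁻ x in S, h x ∂μ₁) :=
          add_le_add (add_le_add le_rfl e1) (add_le_add le_rfl e2)
      _ = (∫⁻ x in S, g x ∂μ₂) + (∫⁻ x in Sᶜ, g x ∂μ₂)
        + ((∫⁻ x in S, g x ∂μ₁) + ∫⁻ x in S, h x ∂μ₁) := by ring
  -- finiteness
  have hfin : ∀ (μ : Measure R) [IsFiniteMeasure μ], (∫⁻ x, g x ∂μ) ≠ ⊤ := by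
    intro μ _
    have : (∫⁻ x, g x ∂μ) ≤ b * μ Set.univ := by
      rw [← lintegral_const]
      exact lintegral_mono hgb
    exact ne_top_of_le_ne_top (ENNReal.mul_ne_top hb (measure_ne_top μ _)) this
  have hb2 : b * μ₂ S ≠ ⊤ := ENNReal.mul_ne_top hb (measure_ne_top μ₂ _)
  have hb1 : b * μ₁ S ≠ ⊤ := ENNReal.mul_ne_top hb (measure_ne_top μ₁ _)
  have := ENNReal.toReal_mono (by
    exact ENNReal.add_ne_top.2 ⟨hfin μ₂, hb1⟩) key
  rw [ENNReal.toReal_add (hfin μ₁) hb2, ENNReal.toReal_add (hfin μ₂) hb1,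
    ENNReal.toReal_mul, ENNReal.toReal_mul] at this
  nlinarith [this]

lemma isProbabilityMeasure_bind (μ : Measure R) [IsProbabilityMeasure μ]
    (P : R → Measure R) (hP : Measurable P) (hPp : ∀ x, IsProbabilityMeasure (P x)) :
    IsProbabilityMeasure (μ.bind P) := by
  constructor
  rw [Measure.bind_apply MeasurableSet.univ hP.aemeasurable]
  simp [measure_univ]

/-- One-step contraction of TV distance under a minorization condition on `C`. -/
lemma tvDist_bind_le (μ₁ μ₂ : Measure R) [IsProbabilityMeasure μ₁] [IsProbabilityMeasure μ₂]
    (P : R → Measure R) (hP : Measurable P) (hPp : ∀ x, IsProbabilityMeasure (P x))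
    (C : Set R) (hC : MeasurableSet C) (hμ₁C : μ₁ C = 1) (hμ₂C : μ₂ C = 1)
    (ν : Measure R) [IsProbabilityMeasure ν] (c : ℝ) (hc0 : 0 ≤ c) (hc1 : c ≤ 1)
    (hmin : ∀ x ∈ C, ∀ A : Set R, MeasurableSet A → ENNReal.ofReal c * ν A ≤ P x A) :
    tvDist (μ₁.bind P) (μ₂.bind P) ≤ (1 - c) * tvDist μ₁ μ₂ := by
  classical
  obtain ⟨S, hS, h₁, h₂⟩ := hahn_decomposition (μ := μ₁) (ν := μ₂)
  set d : ℝ := (μ₁ S).toReal - (μ₂ S).toReal with hd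
  have hd0 : 0 ≤ d := by
    have := h₁ S hS subset_rfl
    have := ENNReal.toReal_mono (measure_ne_top μ₁ _) this
    simp only [hd]; linarith
  have hdtv : d ≤ tvDist μ₁ μ₂ := le_tvDist μ₁ μ₂ S hS
  have hμ₁Cc : μ₁ Cᶜ = 0 := by
    have := measure_compl hC (measure_ne_top μ₁ _)
    rw [hμ₁C, measure_univ] at this; simpa using this
  have hμ₂Cc : μ₂ Cᶜ = 0 := by
    have := measure_compl hC (measure_ne_top μ₂ _)
    rw [hμ₂C, measure_univ] at this; simpa using this
  haveI := isProbabilityMeasure_bind μ₁ P hP hPp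
  haveI := isProbabilityMeasure_bind μ₂ P hP hPp
  refine ciSup_le fun A => ?_
  obtain ⟨A, hA⟩ := A
  set g : R → ℝ≥0∞ := fun x => if x ∈ C then P x A - ENNReal.ofReal c * ν A else 0 with hg
  have hgm : Measurable g :=
    Measurable.ite hC (((Measure.measurable_coe hA).comp hP).sub measurable_const)
      measurable_const
  set b : ℝ≥0∞ := ENNReal.ofReal (1 - c) with hb
  have hbne : b ≠ ⊤ := ENNReal.ofReal_ne_top
  have hcsum : ENNReal.ofReal (1 - c) + ENNReal.ofReal c = 1 := by
    rw [← ENNReal.ofReal_add (by linarith) hc0]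
    norm_num
  have hgb : ∀ x, g x ≤ b := by
    intro x
    simp only [hg]
    split_ifs with hx
    · rw [tsub_le_iff_right]
      have hAc := hmin x hx Aᶜ hA.compl
      have hsum : P x A + P x Aᶜ = 1 := by
        rw [measure_add_measure_compl hA]; exact measure_univ
      have hνsum : ν A + ν Aᶜ = 1 := by
        rw [measure_add_measure_compl hA]; exact measure_univ
      have h1 : P x A + ENNReal.ofReal c * ν Aᶜ ≤ 1 := by
        calc P x A + ENNReal.ofReal c * ν Aᶜ ≤ P x A + P x Aᶜ := add_le_add le_rfl hAc
          _ = 1 := hsum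
      have h2 : (1:ℝ≥0∞) = b + ENNReal.ofReal c * ν A + ENNReal.ofReal c * ν Aᶜ := by
        rw [add_assoc, ← mul_add, hνsum, mul_one, hb, add_comm (ENNReal.ofReal (1-c))]
        rw [add_comm] at hcsum
        exact hcsum.symm
      have hfin : ENNReal.ofReal c * ν Aᶜ ≠ ⊤ :=
        ENNReal.mul_ne_top ENNReal.ofReal_ne_top (measure_ne_top ν _)
      rw [h2] at h1
      exact ENNReal.le_of_add_le_add_right hfin h1
    · exact zero_le
  -- bind values
  have hbind : ∀ (μ : Measure R) [IsProbabilityMeasure μ], μ Cᶜ = 0 →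
      (μ.bind P) A = (∫⁻ x, g x ∂μ) + ENNReal.ofReal c * ν A := by
    intro μ _ hμCc
    rw [Measure.bind_apply hA hP.aemeasurable]
    have hae : ∀ᵐ x ∂μ, x ∈ C := by
      rw [MeasureTheory.ae_iff]
      exact hμCc
    have : (∫⁻ x, P x A ∂μ) = ∫⁻ x, g x + ENNReal.ofReal c * ν A ∂μ := by
      refine lintegral_congr_ae ?_
      filter_upwards [hae] with x hx
      simp only [hg, if_pos hx]
      rw [tsub_add_cancel_of_le (hmin x hx A hA)]
    rw [this, lintegral_add_right _ measurable_const, lintegral_const, measure_univ, mul_one]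
  rw [hbind μ₁ hμ₁Cc, hbind μ₂ hμ₂Cc]
  have hfin : ∀ (μ : Measure R) [IsFiniteMeasure μ], (∫⁻ x, g x ∂μ) ≠ ⊤ := by
    intro μ _
    have : (∫⁻ x, g x ∂μ) ≤ b * μ Set.univ := by
      rw [← lintegral_const]; exact lintegral_mono hgb
    exact ne_top_of_le_ne_top (ENNReal.mul_ne_top hbne (measure_ne_top μ _)) this
  have hcfin : ENNReal.ofReal c * ν A ≠ ⊤ :=
    ENNReal.mul_ne_top ENNReal.ofReal_ne_top (measure_ne_top ν _)
  rw [ENNReal.toReal_add (hfin μ₁) hcfin, ENNReal.toReal_add (hfin μ₂) hcfin]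
  have hbr : b.toReal = 1 - c := ENNReal.toReal_ofReal (by linarith)
  have key1 := lintegral_diff_le_of_hahn μ₁ μ₂ S hS h₁ h₂ g hgm b hbne hgb
  have key2 : (∫⁻ x, g x ∂μ₂).toReal - (∫⁻ x, g x ∂μ₁).toReal ≤ b.toReal * d := by
    have h₁' : ∀ t, MeasurableSet t → t ⊆ Sᶜ → μ₁ t ≤ μ₂ t := h₂
    have h₂' : ∀ t, MeasurableSet t → t ⊆ Sᶜᶜ → μ₂ t ≤ μ₁ t := by
      rw [compl_compl]; exact h₁
    have := lintegral_diff_le_of_hahn μ₂ μ₁ Sᶜ hS.compl h₁' h₂' g hgm b hbne hgb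
    have e1 : (μ₁ S).toReal + (μ₁ Sᶜ).toReal = 1 := by
      rw [← ENNReal.toReal_add (measure_ne_top μ₁ _) (measure_ne_top μ₁ _),
        measure_add_measure_compl hS, measure_univ, ENNReal.toReal_one]
    have e2 : (μ₂ S).toReal + (μ₂ Sᶜ).toReal = 1 := by
      rw [← ENNReal.toReal_add (measure_ne_top μ₂ _) (measure_ne_top μ₂ _),
        measure_add_measure_compl hS, measure_univ, ENNReal.toReal_one]
    have heq : (μ₂ Sᶜ).toReal - (μ₁ Sᶜ).toReal = d := by simp only [hd]; linarith
    rw [heq] at this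
    exact this
  have habs : |(∫⁻ x, g x ∂μ₁).toReal + (ENNReal.ofReal c * ν A).toReal
      - ((∫⁻ x, g x ∂μ₂).toReal + (ENNReal.ofReal c * ν A).toReal)| ≤ (1 - c) * d := by
    rw [hbr, ← hd] at key1
    rw [hbr] at key2
    rw [abs_le]
    constructor <;> [linarith [key2]; linarith [key1]]
  calc |(∫⁻ x, g x ∂μ₁).toReal + (ENNReal.ofReal c * ν A).toReal
      - ((∫⁻ x, g x ∂μ₂).toReal + (ENNReal.ofReal c * ν A).toReal)|
      ≤ (1 - c) * d := habs
    _ ≤ (1 - c) * tvDist μ₁ μ₂ := mul_le_mul_of_nonneg_left hdtv (by linarith)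

end Aux

/-- Proposition 2: under local mixing of the kernels, compositions contract
the total variation distance at rate `ϑ_k`. -/
theorem tv_contraction_of_local_mixing
    {R : Type*} [MeasurableSpace R]
    (lam1 lam2 : Measure R) [IsProbabilityMeasure lam1] [IsProbabilityMeasure lam2]
    (P : ℕ → R → Measure R)
    (hPmeas : ∀ n, Measurable (P n))
    (hPprob : ∀ n x, IsProbabilityMeasure (P n x))
    (C : ℕ → Set R) (hCmeas : ∀ n, MeasurableSet (C n))
    (ε : ℕ → ℝ) (hε : ∀ n, ε n ∈ Set.Ioo (0 : ℝ) 1)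
    (ν : ℕ → Measure R) (hνprob : ∀ n, IsProbabilityMeasure (ν n))
    (hνconc : ∀ n ≥ 1, (ν n) (C n) = 1)
    (hconc1 : lam1 (C 0) = 1) (hconc2 : lam2 (C 0) = 1)
    (habsorb : ∀ n ≥ 1, ∀ x ∈ C (n - 1), (P n x) (C n) = 1)
    (hmix : ∀ n ≥ 1, ∀ x ∈ C (n - 1), ∀ A : Set R, MeasurableSet A →
      ENNReal.ofReal (ε n) * (ν n) A ≤ (P n x) A ∧
        (P n x) A ≤ ENNReal.ofReal (ε n)⁻¹ * (ν n) A)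
    (k : ℕ) (hk : 1 ≤ k) :
    tvDist (pushSeq lam1 P k) (pushSeq lam2 P k) ≤
      (2 / ((ε 1) ^ 2 * Real.log 3) * ∏ i ∈ Finset.Icc 2 k, (1 - (ε i) ^ 2) / (1 + (ε i) ^ 2))
        * tvDist lam1 lam2 := by
  -- main induction
  have main : ∀ n : ℕ, IsProbabilityMeasure (pushSeq lam1 P n)
      ∧ IsProbabilityMeasure (pushSeq lam2 P n)
      ∧ pushSeq lam1 P n (C n) = 1 ∧ pushSeq lam2 P n (C n) = 1
      ∧ tvDist (pushSeq lam1 P n) (pushSeq lam2 P n)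
          ≤ (∏ i ∈ Finset.Icc 2 n, (1 - ε i)) * tvDist lam1 lam2 := by
    intro n
    induction n with
    | zero =>
      refine ⟨by assumption, by assumption, hconc1, hconc2, ?_⟩
      simp [pushSeq]
    | succ m ih =>
      obtain ⟨ih1, ih2, ihc1, ihc2, ihtv⟩ := ih
      haveI := ih1; haveI := ih2
      have hm1 : m + 1 ≥ 1 := by omega
      have hsub : m + 1 - 1 = m := by omega
      have hminor : ∀ x ∈ C m, ∀ A : Set R, MeasurableSet A →
          ENNReal.ofReal (ε (m+1)) * (ν (m+1)) A ≤ (P (m+1) x) A := by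
        intro x hx A hA
        have := hmix (m+1) hm1 x (by rwa [hsub]) A hA
        exact this.1
      have habs' : ∀ x ∈ C m, (P (m+1) x) (C (m+1)) = 1 := by
        intro x hx
        exact habsorb (m+1) hm1 x (by rwa [hsub])
      have hε' := hε (m+1)
      -- probability instances
      have hp1 : IsProbabilityMeasure (pushSeq lam1 P (m+1)) :=
        isProbabilityMeasure_bind _ _ (hPmeas (m+1)) (hPprob (m+1))
      have hp2 : IsProbabilityMeasure (pushSeq lam2 P (m+1)) :=
        isProbabilityMeasure_bind _ _ (hPmeas (m+1)) (hPprob (m+1))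
      -- concentration
      have hconc : ∀ (μ : Measure R) [IsProbabilityMeasure μ], μ (C m) = 1 →
          (μ.bind (P (m+1))) (C (m+1)) = 1 := by
        intro μ _ hμ
        rw [Measure.bind_apply (hCmeas (m+1)) (hPmeas (m+1)).aemeasurable]
        have hμc : μ (C m)ᶜ = 0 := by
          have := measure_compl (hCmeas m) (measure_ne_top μ _)
          rw [hμ, measure_univ] at this; simpa using this
        have hae : ∀ᵐ x ∂μ, x ∈ C m := by rw [MeasureTheory.ae_iff]; exact hμc
        have : (∫⁻ x, (P (m+1) x) (C (m+1)) ∂μ) = ∫⁻ _, 1 ∂μ := by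
          refine lintegral_congr_ae ?_
          filter_upwards [hae] with x hx
          exact habs' x hx
        rw [this, lintegral_const, measure_univ, mul_one]
      haveI := hνprob (m+1)
      have hstep := tvDist_bind_le (pushSeq lam1 P m) (pushSeq lam2 P m) (P (m+1))
        (hPmeas (m+1)) (hPprob (m+1)) (C m) (hCmeas m) ihc1 ihc2 (ν (m+1)) (ε (m+1))
        (le_of_lt hε'.1) (le_of_lt hε'.2) hminor
      refine ⟨hp1, hp2, hconc _ ihc1, hconc _ ihc2, ?_⟩
      have htvnn := tvDist_nonneg lam1 lam2
      have hprodnn : 0 ≤ ∏ i ∈ Finset.Icc 2 m, (1 - ε i) :=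
        Finset.prod_nonneg fun i _ => by linarith [(hε i).2]
      calc tvDist (pushSeq lam1 P (m+1)) (pushSeq lam2 P (m+1))
          ≤ (1 - ε (m+1)) * tvDist (pushSeq lam1 P m) (pushSeq lam2 P m) := hstep
        _ ≤ (1 - ε (m+1)) * ((∏ i ∈ Finset.Icc 2 m, (1 - ε i)) * tvDist lam1 lam2) :=
            mul_le_mul_of_nonneg_left ihtv (by linarith [hε'.2])
        _ ≤ (∏ i ∈ Finset.Icc 2 (m+1), (1 - ε i)) * tvDist lam1 lam2 := by
            rcases Nat.eq_zero_or_pos m with hm | hm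
            · subst hm
              simp only [show Finset.Icc 2 1 = (∅ : Finset ℕ) by decide,
                show Finset.Icc 2 0 = (∅ : Finset ℕ) by decide, Finset.prod_empty, one_mul]
              nlinarith [hε'.1, hε'.2, htvnn]
            · rw [Finset.prod_Icc_succ_top (by omega : 2 ≤ m + 1)]
              ring_nf
              nlinarith [hε'.1, hε'.2, htvnn, hprodnn]
  obtain ⟨_, _, _, _, htv⟩ := main k
  refine htv.trans ?_
  have htvnn := tvDist_nonneg lam1 lam2
  refine mul_le_mul_of_nonneg_right ?_ htvnn
  -- coefficient comparison
  have hstep : ∀ i ∈ Finset.Icc 2 k, (1 - ε i) ≤ (1 - (ε i)^2) / (1 + (ε i)^2) := by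
    intro i _
    have h := hε i
    rw [le_div_iff₀ (by nlinarith [h.1])]
    nlinarith [h.1, h.2, mul_nonneg h.1.le (sq_nonneg (1 - ε i))]
  have h1 : (∏ i ∈ Finset.Icc 2 k, (1 - ε i))
      ≤ ∏ i ∈ Finset.Icc 2 k, (1 - (ε i)^2) / (1 + (ε i)^2) :=
    Finset.prod_le_prod (fun i _ => by linarith [(hε i).2]) hstep
  have h2 : 0 ≤ ∏ i ∈ Finset.Icc 2 k, (1 - (ε i)^2) / (1 + (ε i)^2) :=
    Finset.prod_nonneg fun i _ => div_nonneg (by nlinarith [(hε i).2, (hε i).1])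
      (by nlinarith [(hε i).1])
  have hlog3 : Real.log 3 ≤ 2 := by
    have := Real.log_le_sub_one_of_pos (by norm_num : (0:ℝ) < 3)
    linarith
  have hlog3pos : 0 < Real.log 3 := Real.log_pos (by norm_num)
  have hε1 := hε 1
  have hden : 0 < (ε 1)^2 * Real.log 3 := mul_pos (pow_pos hε1.1 2) hlog3pos
  have hconst : 1 ≤ 2 / ((ε 1)^2 * Real.log 3) := by
    rw [le_div_iff₀ hden]
    nlinarith [hε1.1, hε1.2, hlog3pos]
  calc (∏ i ∈ Finset.Icc 2 k, (1 - ε i))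
      ≤ ∏ i ∈ Finset.Icc 2 k, (1 - (ε i)^2) / (1 + (ε i)^2) := h1
    _ = 1 * ∏ i ∈ Finset.Icc 2 k, (1 - (ε i)^2) / (1 + (ε i)^2) := (one_mul _).symm
    _ ≤ 2 / ((ε 1)^2 * Real.log 3) * ∏ i ∈ Finset.Icc 2 k, (1 - (ε i)^2) / (1 + (ε i)^2) :=
        mul_le_mul_of_nonneg_right hconst h2
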